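/- Let ξ = (w_1,…,w_N) ∈ Ξ with X_1(ξ) = {i : w_i = 0}, X_3(ξ) = {i : w_i = 1/n}, X_2(ξ) = {i : 0 < w_i < 1/n}, suppose F_Φ(ξ; i) = s for every i ∈ X_2(ξ), and suppose there exist ξ_0 ∈ Ξ and δ > 0 with Φ(ξ) − Φ(ξ_0) > δ. If X_1(ξ), X_2(ξ), and X_3(ξ) are all nonempty, then at least one of the following holds: (i) min_{i ∈ X_1(ξ)} F_Φ(ξ; i) − s ≤ −δ/2; (ii) max_{i ∈ X_3(ξ)} F_Φ(ξ; i) − s ≥ δ/2. -/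
import Mathlib


theorem stmt_9
    (N : ℕ) (hN : 1 ≤ N)
    (Δ : Set (Fin N → ℝ))
    (hΔ : Δ = {w : Fin N → ℝ | (∀ i, 0 ≤ w i) ∧ ∑ i, w i = 1})
    (Φ : (Fin N → ℝ) → ℝ)
    (hconv : ConvexOn ℝ Δ Φ)
    (F : (Fin N → ℝ) → (Fin N → ℝ) → ℝ)
    (hF : ∀ ξ ∈ Δ, ∀ η ∈ Δ,
      Filter.Tendsto (fun α : ℝ => (Φ ((1 - α) • ξ + α • η) - Φ ξ) / α)
        (nhdsWithin 0 (Set.Ioi 0)) (nhds (F ξ η)))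
    (hlin : ∀ ξ ∈ Δ, ∀ η ∈ Δ, F ξ η = ∑ i, η i * F ξ (Pi.single i 1))
    (n : ℕ) (hn1 : 1 ≤ n) (hnN : n ≤ N)
    (Ξ : Set (Fin N → ℝ))
    (hΞ : Ξ = {w : Fin N → ℝ | w ∈ Δ ∧ ∀ i, w i ≤ 1 / (n : ℝ)})
    (ξ : Fin N → ℝ) (hmem : ξ ∈ Ξ)
    (X1 X2 X3 : Set (Fin N))
    (hX1 : X1 = {i | ξ i = 0})
    (hX2 : X2 = {i | 0 < ξ i ∧ ξ i < 1 / (n : ℝ)})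
    (hX3 : X3 = {i | ξ i = 1 / (n : ℝ)})
    (s : ℝ) (hs : ∀ i ∈ X2, F ξ (Pi.single i 1) = s)
    (ξ0 : Fin N → ℝ) (hξ0 : ξ0 ∈ Ξ)
    (δ : ℝ) (hδ : 0 < δ)
    (hgap : Φ ξ - Φ ξ0 > δ)
    (hX1ne : X1.Nonempty) (hX2ne : X2.Nonempty) (hX3ne : X3.Nonempty) :
    sInf ((fun i => F ξ (Pi.single i 1)) '' X1) - s ≤ -δ / 2 ∨
      sSup ((fun i => F ξ (Pi.single i 1)) '' X3) - s ≥ δ / 2 := by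
  by_contra hcon
  push_neg at hcon
  obtain ⟨h1, h2⟩ := hcon
  set f : Fin N → ℝ := fun i => F ξ (Pi.single i 1) with hf
  have hnpos : (0:ℝ) < (n:ℝ) := by exact_mod_cast Nat.lt_of_lt_of_le Nat.zero_lt_one hn1
  have hξΞ := hΞ ▸ hmem
  have hξ0Ξ := hΞ ▸ hξ0
  obtain ⟨hξΔ, hξle⟩ := hξΞ
  obtain ⟨hξ0Δ, hξ0le⟩ := hξ0Ξ
  have hξmem := hΔ ▸ hξΔ
  have hξ0mem := hΔ ▸ hξ0Δ
  obtain ⟨hξnn, hξsum⟩ := hξmem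
  obtain ⟨hξ0nn, hξ0sum⟩ := hξ0mem
  -- bounds from negation
  have hlow : ∀ i ∈ X1, s - δ / 2 < f i := by
    intro i hi
    have hle : sInf (f '' X1) ≤ f i :=
      csInf_le (Set.Finite.bddBelow (Set.toFinite _)) ⟨i, hi, rfl⟩
    have := h1
    linarith
  have hhigh : ∀ i ∈ X3, f i < s + δ / 2 := by
    intro i hi
    have hle : f i ≤ sSup (f '' X3) :=
      le_csSup (Set.Finite.bddAbove (Set.toFinite _)) ⟨i, hi, rfl⟩
    linarith
  -- F ξ ξ = 0
  have hF0 : F ξ ξ = 0 := by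
    have h := hF ξ hξΔ ξ hξΔ
    have h0 : Filter.Tendsto (fun α : ℝ => (Φ ((1 - α) • ξ + α • ξ) - Φ ξ) / α)
        (nhdsWithin (0:ℝ) (Set.Ioi 0)) (nhds 0) := by
      have heq : ∀ α : ℝ, (Φ ((1 - α) • ξ + α • ξ) - Φ ξ) / α = 0 := by
        intro α
        have : (1 - α) • ξ + α • ξ = ξ := by
          rw [← add_smul]; simp
        rw [this]; simp
      simp only [heq]
      exact tendsto_const_nhds
    exact tendsto_nhds_unique h h0
  -- F ξ ξ0 ≤ Φ ξ0 - Φ ξ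
  have hFle : F ξ ξ0 ≤ Φ ξ0 - Φ ξ := by
    have h := hF ξ hξΔ ξ0 hξ0Δ
    refine le_of_tendsto h ?_
    filter_upwards [Ioo_mem_nhdsGT_of_mem (Set.left_mem_Ico.mpr one_pos)] with α hα
    have hc := hconv.2 hξΔ hξ0Δ (by linarith [hα.2] : (0:ℝ) ≤ 1 - α)
      (le_of_lt hα.1) (by ring)
    rw [div_le_iff₀ hα.1]
    simp only [smul_eq_mul] at hc
    nlinarith [hc]
  have hsum0 : ∑ i, ξ i * f i = 0 := by
    have := hlin ξ hξΔ ξ hξΔ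
    rw [hF0] at this
    exact this.symm
  have hsum1 : ∑ i, ξ0 i * f i < -δ := by
    have := hlin ξ hξΔ ξ0 hξ0Δ
    rw [← this]
    linarith
  -- pointwise key bound
  have key : ∀ i, (ξ0 i - ξ i) * s - δ / 2 * (ξ0 i + ξ i) ≤ (ξ0 i - ξ i) * f i := by
    intro i
    rcases eq_or_lt_of_le (hξnn i) with h0 | h0
    · -- ξ i = 0, i ∈ X1
      have hi1 : i ∈ X1 := by rw [hX1]; exact h0.symm
      have hfl := hlow i hi1
      have := hξ0nn i
      nlinarith
    · rcases eq_or_lt_of_le (hξle i) with h3 | h3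
      · -- ξ i = 1/n, i ∈ X3
        have hi3 : i ∈ X3 := by rw [hX3]; exact h3
        have hfh := hhigh i hi3
        have hle0 : ξ0 i ≤ ξ i := h3 ▸ hξ0le i
        have := hξ0nn i
        nlinarith
      · have hi2 : i ∈ X2 := by rw [hX2]; exact ⟨h0, h3⟩
        have hfs : f i = s := hs i hi2
        rw [hfs]
        have := hξ0nn i
        nlinarith [hξnn i]
  have hge : -δ ≤ ∑ i, (ξ0 i - ξ i) * f i := by
    have h : ∑ i, ((ξ0 i - ξ i) * s - δ / 2 * (ξ0 i + ξ i)) ≤ ∑ i, (ξ0 i - ξ i) * f i :=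
      Finset.sum_le_sum (fun i _ => key i)
    have hexp : ∑ i, ((ξ0 i - ξ i) * s - δ / 2 * (ξ0 i + ξ i)) = -δ := by
      simp only [sub_mul, mul_add, Finset.sum_sub_distrib, Finset.sum_add_distrib,
        ← Finset.sum_mul, ← Finset.mul_sum, hξsum, hξ0sum]
      ring
    linarith
  have hlt : ∑ i, (ξ0 i - ξ i) * f i < -δ := by
    have hsplit : ∑ i, (ξ0 i - ξ i) * f i = ∑ i, ξ0 i * f i - ∑ i, ξ i * f i := by
      rw [← Finset.sum_sub_distrib]
      exact Finset.sum_congr rfl (fun i _ => by ring)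
    rw [hsplit]
    linarith
  linarith
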